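/- Let m = 2 or m = 3, let P = ∏ p be the product of all odd primes p < 100, and let k be a positive integer coprime to 2P. Then for r = k·P one has ∑_{d=1}^{r} (μ(d)/d^m) {r/d} < −1/20. -/

import Mathlib

open Finset

private lemma tele_aux (t f : ℕ → ℝ) (h : ∀ d, 1 ≤ d → f d ≤ t d - t (d+1)) (b : ℕ) :
    ∑ d ∈ Finset.Icc 1 b, f d ≤ t 1 - t (b+1) := by
  induction b with
  | zero => simp
  | succ b ih =>
    rw [Finset.sum_Icc_succ_top (by omega : 1 ≤ b + 1)]
    have := h (b+1) (by omega)
    linarith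

private lemma tele (t f : ℕ → ℝ) (ht0 : ∀ d, 0 ≤ t d)
    (h : ∀ d, 1 ≤ d → f d ≤ t d - t (d+1)) (b : ℕ) :
    ∑ d ∈ Finset.Icc 1 b, f d ≤ t 1 := by
  have := tele_aux t f h b
  have := ht0 (b+1)
  linarith

private lemma fract_odd_div_two (n : ℕ) (hn : Odd n) : Int.fract ((n : ℝ) / 2) = 1 / 2 := by
  obtain ⟨t, ht⟩ := hn
  subst ht
  push_cast
  rw [show ((2:ℝ) * t + 1) / 2 = (t : ℤ) + 1/2 by push_cast; ring, Int.fract_intCast_add]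
  norm_num [Int.fract]

private lemma moebius_abs_le_one (d : ℕ) : |(ArithmeticFunction.moebius d : ℝ)| ≤ 1 := by
  by_cases hsq : Squarefree d
  · rw [ArithmeticFunction.moebius_apply_of_squarefree hsq]
    push_cast
    rw [abs_pow, abs_neg, abs_one, one_pow]
  · rw [ArithmeticFunction.moebius_eq_zero_of_not_squarefree hsq]
    norm_num

private lemma bound1 (x y f : ℝ) (hx : |x| ≤ 1) (h0 : 0 ≤ f) (h1 : f ≤ 1) (hy : 0 < y) :
    x / y * f ≤ 1 / y := by
  rw [div_mul_eq_mul_div]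
  gcongr
  nlinarith [abs_le.mp hx]

private lemma bound_half (x y : ℝ) (hx : x ≤ 1) (hy : 0 < y) :
    x / y * (1/2) ≤ 1 / (2*y) := by
  rw [show (1:ℝ)/(2*y) = 1/y * (1/2) by field_simp]
  have : x / y ≤ 1 / y := by gcongr
  linarith

private lemma master (m : ℕ) (r : ℕ) (hr2 : 2 ≤ r) (hrodd : Odd r)
    (hfac : ∀ e : ℕ, Odd e → Squarefree e → ¬ e ∣ r → 101 ≤ e)
    (A D : ℝ) (hA0 : 0 ≤ A) (hD0 : 0 ≤ D)
    (hA : ∀ j : ℕ, 1 ≤ j → 1/(2*((4*j+2 : ℕ) : ℝ)^m) ≤ A/(2*(j:ℝ)) - A/(2*((j:ℝ)+1)))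
    (hD : ∀ d : ℕ, 101 ≤ d → 1/((d:ℝ))^m ≤ D/((d:ℝ)-1) - D/(d:ℝ))
    (hnum : -1/2^(m+1) + A/2 + D/100 < (-1/20 : ℝ)) :
    ∑ d ∈ Finset.Icc 1 r, (ArithmeticFunction.moebius d : ℝ) / (d : ℝ) ^ m *
      Int.fract ((r : ℝ) / d) < -1 / 20 := by
  classical
  set g : ℕ → ℝ := fun d =>
      (if d = 2 then -1/2^(m+1) else 0) +
      ((if d % 4 = 2 ∧ 6 ≤ d then 1/(2*(d:ℝ)^m) else 0) +
       (if 101 ≤ d then 1/(d:ℝ)^m else 0)) with hg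
  have key : ∀ d ∈ Finset.Icc 1 r,
      (ArithmeticFunction.moebius d : ℝ) / (d : ℝ) ^ m * Int.fract ((r : ℝ) / d) ≤ g d := by
    intro d hd
    rw [Finset.mem_Icc] at hd
    obtain ⟨hd1, hdr⟩ := hd
    have hdR : (0:ℝ) < (d:ℝ) := by exact_mod_cast hd1
    have hdpos : (0:ℝ) < (d:ℝ)^m := by positivity
    have hf0 : 0 ≤ Int.fract ((r : ℝ) / d) := Int.fract_nonneg _
    have hf1 : Int.fract ((r : ℝ) / d) ≤ 1 := (Int.fract_lt_one _).le
    by_cases hd2 : d = 2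
    · subst hd2
      have hμ2 : (ArithmeticFunction.moebius 2 : ℝ) = -1 := by
        rw [ArithmeticFunction.moebius_apply_prime Nat.prime_two]; norm_num
      have hc2 : ((2:ℕ):ℝ) = 2 := by norm_num
      rw [hμ2, hc2, fract_odd_div_two r hrodd]
      have : g 2 = -1/2^(m+1) := by simp [hg]
      rw [this, pow_succ]
      ring_nf
      exact le_refl _
    · -- d ≠ 2 : decompose g d
      have hB0 : (0:ℝ) ≤ (if d % 4 = 2 ∧ 6 ≤ d then 1/(2*(d:ℝ)^m) else 0) := by
        split_ifs <;> positivity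
      have hC0 : (0:ℝ) ≤ (if 101 ≤ d then 1/(d:ℝ)^m else 0) := by
        split_ifs <;> positivity
      have hg_eq : g d = (if d % 4 = 2 ∧ 6 ≤ d then 1/(2*(d:ℝ)^m) else 0) +
          (if 101 ≤ d then 1/(d:ℝ)^m else 0) := by
        simp only [hg]; rw [if_neg hd2]; ring
      by_cases hdvd : d ∣ r
      · obtain ⟨c, hc⟩ := hdvd
        have hfr : Int.fract ((r : ℝ) / d) = 0 := by
          rw [hc]
          push_cast
          rw [mul_comm, mul_div_assoc, div_self (ne_of_gt hdR), mul_one, Int.fract_natCast]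
        rw [hfr, mul_zero, hg_eq]
        linarith
      · by_cases hsq : Squarefree d
        · rcases Nat.even_or_odd d with hev | hodd
          · obtain ⟨e, he⟩ := hev
            have he2 : d = 2 * e := by omega
            have heodd : Odd e := by
              rcases Nat.even_or_odd e with h2e | h2e
              · exfalso
                obtain ⟨u, hu⟩ := h2e
                have h4 : (2*2) ∣ d := ⟨u, by omega⟩
                have := hsq 2 (by simpa using h4)
                simp [Nat.isUnit_iff] at this
              · exact h2e
            have hesq : Squarefree e := hsq.squarefree_of_dvd ⟨2, by omega⟩
            by_cases hedvd : e ∣ r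
            · have he1 : e ≠ 1 := fun h => hd2 (by omega)
              have hcond : d % 4 = 2 ∧ 6 ≤ d := by
                obtain ⟨t, ht⟩ := heodd
                constructor <;> omega
              obtain ⟨s, hs⟩ := hedvd
              have hsodd : Odd s := by
                rw [hs] at hrodd
                exact (Nat.odd_mul.mp hrodd).2
              have hepos : (0:ℝ) < (e:ℝ) := by
                have : 1 ≤ e := by omega
                exact_mod_cast this
              have hfr : Int.fract ((r : ℝ) / d) = 1 / 2 := by
                rw [hs, he2]
                push_cast
                rw [show ((e:ℝ) * s) / (2 * e) = (s:ℝ)/2 by field_simp]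
                exact fract_odd_div_two s hsodd
              rw [hfr]
              have hμle : (ArithmeticFunction.moebius d : ℝ) ≤ 1 :=
                (abs_le.mp (moebius_abs_le_one d)).2
              have hstep := bound_half (ArithmeticFunction.moebius d : ℝ) ((d:ℝ)^m) hμle hdpos
              rw [hg_eq, if_pos hcond]
              linarith
            · have he101 : 101 ≤ e := hfac e heodd hesq hedvd
              have hd101 : 101 ≤ d := by omega
              have hstep := bound1 (ArithmeticFunction.moebius d : ℝ) ((d:ℝ)^m)
                (Int.fract ((r : ℝ) / d)) (moebius_abs_le_one d) hf0 hf1 hdpos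
              rw [hg_eq, if_pos hd101]
              linarith
          · have hd101 : 101 ≤ d := hfac d hodd hsq hdvd
            have hstep := bound1 (ArithmeticFunction.moebius d : ℝ) ((d:ℝ)^m)
              (Int.fract ((r : ℝ) / d)) (moebius_abs_le_one d) hf0 hf1 hdpos
            rw [hg_eq, if_pos hd101]
            linarith
        · rw [ArithmeticFunction.moebius_eq_zero_of_not_squarefree hsq]
          rw [hg_eq]
          simp only [Int.cast_zero, zero_div, zero_mul]
          linarith
  have hsum := Finset.sum_le_sum key
  simp only [hg] at hsum
  rw [Finset.sum_add_distrib, Finset.sum_add_distrib] at hsum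
  have hs1 : ∑ d ∈ Finset.Icc 1 r, (if d = 2 then (-1/2^(m+1) : ℝ) else 0) = -1/2^(m+1) := by
    rw [Finset.sum_ite_eq' (Finset.Icc 1 r) 2 (fun _ => (-1/2^(m+1) : ℝ))]
    rw [if_pos (by rw [Finset.mem_Icc]; omega)]
  have hs2 : ∑ d ∈ Finset.Icc 1 r, (if d % 4 = 2 ∧ 6 ≤ d then 1/(2*(d:ℝ)^m) else 0) ≤ A/2 := by
    have hmain := tele (fun d => A / (2 * ((max 1 ((d+1)/4) : ℕ) : ℝ)))
      (fun d => if d % 4 = 2 ∧ 6 ≤ d then 1/(2*(d:ℝ)^m) else 0)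
      (fun d => by positivity)
      (fun d hd1 => by
        by_cases hc : d % 4 = 2 ∧ 6 ≤ d
        · simp only [if_pos hc]
          have hdj : d = 4 * (d/4) + 2 := by omega
          set j := d / 4 with hj
          have hj1 : 1 ≤ j := by omega
          have e1 : max 1 ((d+1)/4) = j := by omega
          have e2 : max 1 ((d+1+1)/4) = j + 1 := by omega
          simp only [e1, e2]
          have hAj := hA j hj1
          rw [hdj]
          push_cast at hAj ⊢
          convert hAj using 3
        · simp only [if_neg hc]
          have hle : (max 1 ((d+1)/4) : ℕ) ≤ max 1 ((d+1+1)/4) := by omega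
          have h1 : (1:ℝ) ≤ ((max 1 ((d+1)/4) : ℕ) : ℝ) := by
            exact_mod_cast le_max_left 1 ((d+1)/4)
          have h2 : ((max 1 ((d+1)/4) : ℕ) : ℝ) ≤ ((max 1 ((d+1+1)/4) : ℕ) : ℝ) := by
            exact_mod_cast hle
          have := div_le_div_of_nonneg_left hA0
            (by linarith : (0:ℝ) < 2 * ((max 1 ((d+1)/4) : ℕ) : ℝ))
            (by linarith : 2 * ((max 1 ((d+1)/4) : ℕ) : ℝ) ≤ 2 * ((max 1 ((d+1+1)/4) : ℕ) : ℝ))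
          linarith) r
    have ht1 : ((max 1 ((1+1)/4) : ℕ) : ℝ) = 1 := by norm_num
    rw [ht1] at hmain
    calc _ ≤ A / (2*1) := hmain
      _ = A/2 := by norm_num
  have hs3 : ∑ d ∈ Finset.Icc 1 r, (if 101 ≤ d then 1/((d:ℝ))^m else 0) ≤ D/100 := by
    have hmain := tele (fun d => D / ((max 100 (d-1) : ℕ) : ℝ))
      (fun d => if 101 ≤ d then 1/((d:ℝ))^m else 0)
      (fun d => by positivity)
      (fun d hd1 => by
        by_cases hc : 101 ≤ d
        · simp only [if_pos hc]
          have e1 : max 100 (d-1) = d - 1 := by omega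
          have e2 : max 100 (d+1-1) = d := by omega
          simp only [e1, e2]
          have hDd := hD d hc
          have hcast : ((d - 1 : ℕ) : ℝ) = (d:ℝ) - 1 := by
            have : 1 ≤ d := by omega
            push_cast [this]
            ring
          rw [hcast]
          exact hDd
        · simp only [if_neg hc]
          have hle : (max 100 (d-1) : ℕ) ≤ max 100 (d+1-1) := by omega
          have h1 : (100:ℝ) ≤ ((max 100 (d-1) : ℕ) : ℝ) := by
            exact_mod_cast le_max_left 100 (d-1)
          have h2 : ((max 100 (d-1) : ℕ) : ℝ) ≤ ((max 100 (d+1-1) : ℕ) : ℝ) := by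
            exact_mod_cast hle
          have := div_le_div_of_nonneg_left hD0
            (by linarith : (0:ℝ) < ((max 100 (d-1) : ℕ) : ℝ))
            h2
          linarith) r
    have ht1 : ((max 100 (1-1) : ℕ) : ℝ) = 100 := by norm_num
    rw [ht1] at hmain
    exact hmain
  calc ∑ d ∈ Finset.Icc 1 r, (ArithmeticFunction.moebius d : ℝ) / (d : ℝ) ^ m *
      Int.fract ((r : ℝ) / d) ≤ _ := hsum
    _ ≤ -1/2^(m+1) + (A/2 + D/100) := by rw [hs1]; gcongr
    _ < -1/20 := by linarith
set_option maxHeartbeats 2000000 in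
theorem moebius_fract_sum_neg_m23 (m : ℕ) (hm : m = 2 ∨ m = 3) (k : ℕ) (hk : 0 < k)
    (hcop : Nat.Coprime k
      (2 * ∏ p ∈ (Finset.range 100).filter fun p => Nat.Prime p ∧ Odd p, p)) :
    ∑ d ∈ Finset.Icc 1 (k * ∏ p ∈ (Finset.range 100).filter fun p => Nat.Prime p ∧ Odd p, p),
        (ArithmeticFunction.moebius d : ℝ) / (d : ℝ) ^ m *
          Int.fract (((k * ∏ p ∈ (Finset.range 100).filter fun p => Nat.Prime p ∧ Odd p, p : ℕ) : ℝ) / d)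
      < -1 / 20 := by
  set F : Finset ℕ := (Finset.range 100).filter fun p => Nat.Prime p ∧ Odd p with hF
  set P : ℕ := ∏ p ∈ F, p with hP
  set r : ℕ := k * P with hr
  have hPodd : Odd P := by
    refine Finset.prod_induction _ Odd (fun _ _ => Odd.mul) odd_one fun x hx => ?_
    exact (Finset.mem_filter.mp hx).2.2
  have hkodd : Odd k := by
    have h2 : Nat.Coprime k 2 := Nat.Coprime.coprime_dvd_right ⟨P, rfl⟩ hcop
    rcases Nat.even_or_odd k with he | ho
    · exact absurd (Nat.Coprime.eq_one_of_dvd h2.symm he.two_dvd) (by norm_num)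
    · exact ho
  have hrodd : Odd r := hkodd.mul hPodd
  have h3P : (3 : ℕ) ∣ P := by
    apply Finset.dvd_prod_of_mem
    rw [hF, Finset.mem_filter]
    refine ⟨by norm_num, Nat.prime_three, by decide⟩
  have hPpos : 0 < P := by
    apply Finset.prod_pos
    intro p hp
    exact (Finset.mem_filter.mp hp).2.1.pos
  have hr2 : 2 ≤ r := by
    have hP3 : 3 ≤ P := Nat.le_of_dvd hPpos h3P
    calc 2 ≤ 1 * 3 := by norm_num
      _ ≤ k * P := Nat.mul_le_mul hk hP3
  have hfac : ∀ e : ℕ, Odd e → Squarefree e → ¬ e ∣ r → 101 ≤ e := by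
    intro e heodd hesq hedvd
    by_contra hlt
    push_neg at hlt
    apply hedvd
    have hsub : e.primeFactors ⊆ F := by
      intro q hq
      rw [Nat.mem_primeFactors] at hq
      obtain ⟨hqp, hqe, -⟩ := hq
      have hqodd : Odd q := by
        rcases Nat.even_or_odd q with hev | h; swap
        · exact h
        exfalso
        have h2q : 2 ∣ q := hev.two_dvd
        have : (2:ℕ) ∣ e := h2q.trans hqe
        exact (Nat.not_even_iff_odd.mpr heodd) (even_iff_two_dvd.mpr this)
      have hqle : q ≤ e := Nat.le_of_dvd (Nat.pos_of_ne_zero hesq.ne_zero) hqe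
      have hq100 : q < 100 := by
        obtain ⟨t, ht⟩ := hqodd
        omega
      rw [hF, Finset.mem_filter, Finset.mem_range]
      exact ⟨hq100, hqp, hqodd⟩
    have heP : e ∣ P := by
      rw [← Nat.prod_primeFactors_of_squarefree hesq, hP]
      exact Finset.prod_dvd_prod_of_subset _ _ _ hsub
    exact heP.trans ⟨k, by rw [hr]; ring⟩
  rcases hm with hm2 | hm3
  · subst hm2
    apply master 2 r hr2 hrodd hfac (1/16) 1 (by norm_num) (by norm_num)
    · intro j hj
      have hx : (1:ℝ) ≤ (j:ℝ) := by exact_mod_cast hj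
      set x : ℝ := (j:ℝ) with hxd
      have hx0 : (0:ℝ) < x := by linarith
      push_cast
      have hdiff : (1/16)/(2*x) - (1/16)/(2*(x+1)) = 1/(32*x*(x+1)) := by
        field_simp
        ring
      rw [hdiff]
      apply one_div_le_one_div_of_le (by positivity)
      nlinarith
    · intro d hd
      have hx : (101:ℝ) ≤ (d:ℝ) := by exact_mod_cast hd
      set x : ℝ := (d:ℝ) with hxd
      have hne1 : x - 1 ≠ 0 := by nlinarith
      have hne0 : x ≠ 0 := by nlinarith
      have hdiff : (1:ℝ)/(x-1) - 1/x = 1/((x-1)*x) := by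
        field_simp
        ring
      rw [hdiff]
      apply one_div_le_one_div_of_le (by nlinarith)
      nlinarith
    · norm_num
  · subst hm3
    apply master 3 r hr2 hrodd hfac (1/96) (1/101) (by norm_num) (by norm_num)
    · intro j hj
      have hx : (1:ℝ) ≤ (j:ℝ) := by exact_mod_cast hj
      set x : ℝ := (j:ℝ) with hxd
      have hx0 : (0:ℝ) < x := by linarith
      push_cast
      have hdiff : (1/96)/(2*x) - (1/96)/(2*(x+1)) = 1/(192*x*(x+1)) := by
        field_simp
        ring
      rw [hdiff]
      apply one_div_le_one_div_of_le (by positivity)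
      nlinarith [sq_nonneg (x-1), sq_nonneg x, mul_pos hx0 hx0]
    · intro d hd
      have hx : (101:ℝ) ≤ (d:ℝ) := by exact_mod_cast hd
      set x : ℝ := (d:ℝ) with hxd
      have hne1 : x - 1 ≠ 0 := by nlinarith
      have hne0 : x ≠ 0 := by nlinarith
      have hdiff : (1/101:ℝ)/(x-1) - (1/101)/x = 1/(101*(x-1)*x) := by
        field_simp
        ring
      rw [hdiff]
      apply one_div_le_one_div_of_le (by nlinarith)
      have h2 : (0:ℝ) ≤ x*(x*(x-101)) :=
        mul_nonneg (by linarith) (mul_nonneg (by linarith) (by linarith))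
      nlinarith [h2, hx]
    · norm_num
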